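/- If for each j the conditioning sets are nested, S_{d-2}(j;p) ⊆ S_{d-1}(j;p) for all d = 3,...,D, then the Kullback–Leibler divergence KL(f ‖ f_{V;d}) from the true density f to the Vecchia approximation of cutoff dimension d is monotone non-increasing in d. -/

import Mathlib

open Finset

/-- Marginal density of the coordinates in `S` (discrete formulation). -/
noncomputable def marginal {D : ℕ} {α : Type*} [Fintype α] [DecidableEq α]
    (f : (Fin D → α) → ℝ) (S : Finset (Fin D)) (z : Fin D → α) : ℝ :=
  ∑ w : Fin D → α, if ∀ i ∈ S, w i = z i then f w else 0

/-- History of the `j`-th step under the ordering `p`. -/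
def history {D : ℕ} (p : Equiv.Perm (Fin D)) (j : Fin D) : Finset (Fin D) :=
  (Finset.univ.filter (fun l => l < j)).image p

/-- The Vecchia approximation built from conditional densities of `f`. -/
noncomputable def vecchia {D : ℕ} {α : Type*} [Fintype α] [DecidableEq α]
    (f : (Fin D → α) → ℝ) (p : Equiv.Perm (Fin D)) (S : Fin D → Finset (Fin D))
    (z : Fin D → α) : ℝ :=
  ∏ j : Fin D, marginal f (insert (p j) (S j)) z / marginal f (S j) z

/-- Kullback–Leibler divergence `KL(f‖g) = ∑ f log(f/g)` (discrete formulation). -/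
noncomputable def KL {D : ℕ} {α : Type*} [Fintype α]
    (f g : (Fin D → α) → ℝ) : ℝ :=
  ∑ z : Fin D → α, f z * Real.log (f z / g z)

section Aux
variable {D : ℕ} {α : Type*} [Fintype α] [DecidableEq α]

lemma marginal_pos (f : (Fin D → α) → ℝ) (hpos : ∀ z, 0 < f z)
    (T : Finset (Fin D)) (z : Fin D → α) : 0 < marginal f T z := by
  unfold marginal
  apply Finset.sum_pos'
  · intro w _
    by_cases h : ∀ i ∈ T, w i = z i
    · rw [if_pos h]; exact (hpos w).le
    · rw [if_neg h]
  · exact ⟨z, Finset.mem_univ z, by simp [hpos z]⟩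

lemma marginal_congr (f : (Fin D → α) → ℝ) (T : Finset (Fin D)) {z z' : Fin D → α}
    (h : ∀ i ∈ T, z i = z' i) : marginal f T z = marginal f T z' := by
  unfold marginal
  refine Finset.sum_congr rfl fun w _ => ?_
  refine if_congr ?_ rfl rfl
  constructor <;> intro hw i hi
  · rw [hw i hi, h i hi]
  · rw [hw i hi, ← h i hi]

lemma card_agree (T : Finset (Fin D)) (w : Fin D → α) :
    ((univ : Finset (Fin D → α)).filter fun v => ∀ i ∈ T, w i = v i).card
      = Fintype.card α ^ (D - T.card) := by
  classical
  rw [← Fintype.card_subtype]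
  let e : {v : Fin D → α // ∀ i ∈ T, w i = v i} ≃ ({i : Fin D // i ∉ T} → α) :=
    { toFun := fun v i => v.1 i.1
      invFun := fun g => ⟨fun i => if h : i ∈ T then w i else g ⟨i, h⟩,
        fun i hi => by simp [hi]⟩
      left_inv := fun v => by
        ext i
        by_cases h : i ∈ T
        · simp [h, (v.2 i h)]
        · simp [h]
      right_inv := fun g => by
        ext i
        simp [i.2] }
  rw [Fintype.card_congr e, Fintype.card_fun]
  congr 1
  rw [Fintype.card_subtype_compl, Fintype.card_fin, Fintype.card_coe]

lemma sum_marginal_mul (f : (Fin D → α) → ℝ) (T : Finset (Fin D))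
    (g : (Fin D → α) → ℝ) (hg : ∀ z w : Fin D → α, (∀ i ∈ T, z i = w i) → g z = g w) :
    ∑ z : Fin D → α, marginal f T z * g z
      = ((Fintype.card α : ℝ)) ^ (D - T.card) * ∑ z : Fin D → α, f z * g z := by
  unfold marginal
  simp only [Finset.sum_mul]
  rw [Finset.sum_comm, Finset.mul_sum]
  refine Finset.sum_congr rfl fun w _ => ?_
  have h1 : ∀ z : Fin D → α, (if ∀ i ∈ T, w i = z i then f w else 0) * g z
      = if ∀ i ∈ T, w i = z i then f w * g w else 0 := by
    intro z
    by_cases h : ∀ i ∈ T, w i = z i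
    · simp [h, hg w z h]
    · simp [h]
  rw [Finset.sum_congr rfl fun z _ => h1 z, ← Finset.sum_filter, Finset.sum_const,
    nsmul_eq_mul, card_agree]
  push_cast
  ring

lemma sum_marginal_update (f : (Fin D → α) → ℝ) {x : Fin D} {S : Finset (Fin D)}
    (hx : x ∉ S) (z : Fin D → α) :
    ∑ a : α, marginal f (insert x S) (Function.update z x a) = marginal f S z := by
  unfold marginal
  rw [Finset.sum_comm]
  refine Finset.sum_congr rfl fun w _ => ?_
  have key : ∀ a : α, (∀ i ∈ insert x S, w i = Function.update z x a i)
      ↔ (w x = a ∧ ∀ i ∈ S, w i = z i) := by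
    intro a
    constructor
    · intro h
      refine ⟨by simpa using h x (mem_insert_self x S), fun i hi => ?_⟩
      have h2 := h i (mem_insert_of_mem hi)
      have hix : i ≠ x := fun he => hx (by rw [← he]; exact hi)
      rwa [Function.update_of_ne hix] at h2
    · rintro ⟨h1, h2⟩ i hi
      rcases mem_insert.mp hi with rfl | hi
      · simpa using h1
      · have hix : i ≠ x := fun he => hx (by rw [← he]; exact hi)
        rw [Function.update_of_ne hix]; exact h2 i hi
  rw [Finset.sum_congr rfl fun a _ => if_congr (key a) rfl rfl]
  by_cases hC : ∀ i ∈ S, w i = z i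
  · have h3 : ∀ a : α, (w x = a ∧ ∀ i ∈ S, w i = z i) ↔ w x = a :=
      fun a => ⟨fun h => h.1, fun h => ⟨h, hC⟩⟩
    rw [Finset.sum_congr rfl fun a _ => if_congr (h3 a) rfl rfl, if_pos hC,
      Finset.sum_ite_eq]
    simp
  · rw [if_neg hC]
    exact Finset.sum_eq_zero fun a _ => if_neg (fun h => hC h.2)

lemma sum_update (x : Fin D) (F : (Fin D → α) → ℝ) :
    ∑ z : Fin D → α, ∑ a : α, F (Function.update z x a)
      = (Fintype.card α : ℝ) * ∑ z : Fin D → α, F z := by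
  classical
  let e : ((Fin D → α) × α) ≃ ((Fin D → α) × α) :=
    { toFun := fun q => (Function.update q.1 x q.2, q.1 x)
      invFun := fun q => (Function.update q.1 x q.2, q.1 x)
      left_inv := fun q => by
        simp [Function.update_idem]
      right_inv := fun q => by
        simp [Function.update_idem] }
  have h1 : ∑ q : (Fin D → α) × α, F (Function.update q.1 x q.2)
      = ∑ q : (Fin D → α) × α, F q.1 := by
    have := Equiv.sum_comp e (fun q : (Fin D → α) × α => F q.1)
    simpa [e] using this
  calc ∑ z : Fin D → α, ∑ a : α, F (Function.update z x a)
      = ∑ q : (Fin D → α) × α, F (Function.update q.1 x q.2) := by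
        rw [Fintype.sum_prod_type]
    _ = ∑ q : (Fin D → α) × α, F q.1 := h1
    _ = (Fintype.card α : ℝ) * ∑ z : Fin D → α, F z := by
        rw [Fintype.sum_prod_type]
        simp [Finset.sum_const, mul_comm, Finset.mul_sum]

end Aux

section Core
variable {D : ℕ} {α : Type*} [Fintype α] [DecidableEq α]

lemma gain_mono (f : (Fin D → α) → ℝ) (hpos : ∀ z, 0 < f z)
    (hsum : ∑ z : Fin D → α, f z = 1) (hα : Nonempty α)
    {x : Fin D} {S S' : Finset (Fin D)} (hx : x ∉ S') (hSS : S ⊆ S') :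
    ∑ z : Fin D → α, f z * Real.log (marginal f (insert x S) z / marginal f S z)
      ≤ ∑ z : Fin D → α, f z * Real.log (marginal f (insert x S') z / marginal f S' z) := by
  classical
  set A := insert x S with hA
  set T := insert x S' with hT
  have hxS : x ∉ S := fun h => hx (hSS h)
  have hAT : A ⊆ T := insert_subset_insert x hSS
  have hST : S ⊆ T := hSS.trans (subset_insert x S')
  have hS'T : S' ⊆ T := subset_insert x S'
  have mpos : ∀ (U : Finset (Fin D)) z, 0 < marginal f U z := marginal_pos f hpos
  set h : (Fin D → α) → ℝ :=
    fun z => marginal f A z * marginal f S' z / (marginal f S z * marginal f T z) with hh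
  have hhpos : ∀ z, 0 < h z := fun z =>
    div_pos (mul_pos (mpos A z) (mpos S' z)) (mul_pos (mpos S z) (mpos T z))
  have hmeas : ∀ z w : Fin D → α, (∀ i ∈ T, z i = w i) → h z = h w := by
    intro z w hzw
    simp only [hh]
    rw [marginal_congr f A (fun i hi => hzw i (hAT hi)),
      marginal_congr f S' (fun i hi => hzw i (hS'T hi)),
      marginal_congr f S (fun i hi => hzw i (hST hi)),
      marginal_congr f T hzw]
  have hcα : (0:ℝ) < (Fintype.card α : ℝ) := by
    exact_mod_cast Fintype.card_pos
  have hTcard : T.card = S'.card + 1 := card_insert_of_notMem hx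
  have hS'card : S'.card < D := by
    have h1 : S' ⊆ (univ : Finset (Fin D)).erase x := fun i hi =>
      mem_erase.mpr ⟨fun he => hx (he ▸ hi), mem_univ i⟩
    have h2 := Finset.card_le_card h1
    rw [Finset.card_erase_of_mem (mem_univ x), Finset.card_univ, Fintype.card_fin] at h2
    have hD : 0 < D := x.pos
    omega
  -- Step 1: ∑ m_T h = n_T * ∑ f h, and ∑ m_T h = Σ'
  have step1 : ∑ z : Fin D → α, marginal f T z * h z
      = (Fintype.card α : ℝ) ^ (D - T.card) * ∑ z : Fin D → α, f z * h z :=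
    sum_marginal_mul f T h hmeas
  have step1' : ∑ z : Fin D → α, marginal f T z * h z
      = ∑ z : Fin D → α, marginal f A z * marginal f S' z / marginal f S z := by
    refine Finset.sum_congr rfl fun z _ => ?_
    have h1 := (mpos T z).ne'
    have h2 := (mpos S z).ne'
    field_simp [hh]
    simp only [hh]; field_simp
  -- Step 2: |α| * Σ' = ∑ m_S'
  have step2 : (Fintype.card α : ℝ)
        * ∑ z : Fin D → α, marginal f A z * marginal f S' z / marginal f S z
      = ∑ z : Fin D → α, marginal f S' z := by
    rw [← sum_update x (fun z => marginal f A z * marginal f S' z / marginal f S z)]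
    refine Finset.sum_congr rfl fun z _ => ?_
    have hup : ∀ (U : Finset (Fin D)), x ∉ U → ∀ a : α,
        marginal f U (Function.update z x a) = marginal f U z := by
      intro U hU a
      refine marginal_congr f U fun i hi => ?_
      have hix : i ≠ x := fun he => hU (by rw [← he]; exact hi)
      exact Function.update_of_ne hix a z
    calc ∑ a : α, marginal f A (Function.update z x a) * marginal f S' (Function.update z x a)
            / marginal f S (Function.update z x a)
        = ∑ a : α, marginal f A (Function.update z x a) * (marginal f S' z / marginal f S z) := by
          refine Finset.sum_congr rfl fun a _ => ?_
          rw [hup S' hx a, hup S hxS a]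
          ring
      _ = (∑ a : α, marginal f A (Function.update z x a)) * (marginal f S' z / marginal f S z) := by
          rw [Finset.sum_mul]
      _ = marginal f S z * (marginal f S' z / marginal f S z) := by
          rw [sum_marginal_update f hxS z]
      _ = marginal f S' z := by
          field_simp [(mpos S z).ne']
  -- Step 3: ∑ m_S' = |α|^(D - S'.card)
  have step3 : ∑ z : Fin D → α, marginal f S' z
      = (Fintype.card α : ℝ) ^ (D - S'.card) := by
    have := sum_marginal_mul f S' (fun _ => 1) (fun _ _ _ => rfl)
    simpa [hsum] using this
  -- Conclude ∑ f h = 1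
  have hOne : ∑ z : Fin D → α, f z * h z = 1 := by
    have hexp : (Fintype.card α : ℝ) * (Fintype.card α : ℝ) ^ (D - T.card)
        = (Fintype.card α : ℝ) ^ (D - S'.card) := by
      rw [← pow_succ']
      congr 1
      omega
    have e1 : (Fintype.card α : ℝ) * ((Fintype.card α : ℝ) ^ (D - T.card)
        * ∑ z : Fin D → α, f z * h z) = (Fintype.card α : ℝ) ^ (D - S'.card) := by
      rw [← step1, step1', step2, step3]
    rw [← mul_assoc, hexp] at e1
    have hne : ((Fintype.card α : ℝ) ^ (D - S'.card)) ≠ 0 := by positivity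
    exact mul_left_cancel₀ hne (e1.trans (mul_one _).symm)
  -- final inequality
  have key : ∀ z : Fin D → α,
      f z * Real.log (marginal f A z / marginal f S z)
        - f z * Real.log (marginal f T z / marginal f S' z) ≤ f z * (h z - 1) := by
    intro z
    rw [← mul_sub]
    refine mul_le_mul_of_nonneg_left ?_ (hpos z).le
    have hlog : Real.log (marginal f A z / marginal f S z)
        - Real.log (marginal f T z / marginal f S' z) = Real.log (h z) := by
      rw [← Real.log_div (div_pos (mpos A z) (mpos S z)).ne'
        (div_pos (mpos T z) (mpos S' z)).ne']
      congr 1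
      have n1 := (mpos A z).ne'
      have n2 := (mpos S z).ne'
      have n3 := (mpos T z).ne'
      have n4 := (mpos S' z).ne'
      rw [hh]
      field_simp
    rw [hlog]
    linarith [Real.log_le_sub_one_of_pos (hhpos z)]
  have hle := Finset.sum_le_sum (fun z (_ : z ∈ (univ : Finset (Fin D → α))) => key z)
  have hsum2 : ∑ z : Fin D → α, f z * (h z - 1) = 0 := by
    have : ∑ z : Fin D → α, f z * (h z - 1)
        = (∑ z : Fin D → α, f z * h z) - ∑ z : Fin D → α, f z := by
      rw [← Finset.sum_sub_distrib]
      exact Finset.sum_congr rfl fun z _ => by ring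
    rw [this, hOne, hsum]; ring
  rw [← sub_nonpos, ← Finset.sum_sub_distrib]
  exact hle.trans_eq hsum2

end Core

/-- If the conditioning sets `S_{d-1}(j;p)` (here `S j d`, for cutoff dimension `d`)
are nested in `d` (and each of cardinality `min(j,d) - 1`, contained in the history
`H(j;p)`), then the KL divergence `KL(f ‖ f_{V;d})` from the true density `f` to the
Vecchia approximation of cutoff dimension `d` is monotone non-increasing in `d`. -/
theorem KL_vecchia_antitone_in_cutoff
    {D : ℕ} {α : Type*} [Fintype α] [DecidableEq α]
    (f : (Fin D → α) → ℝ) (p : Equiv.Perm (Fin D))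
    (S : Fin D → ℕ → Finset (Fin D))
    (hpos : ∀ z, 0 < f z) (hsum : ∑ z : Fin D → α, f z = 1)
    (hhist : ∀ j d, S j d ⊆ history p j)
    (hcard : ∀ j d, (S j d).card = min (j.val + 1) d - 1)
    (hnested : ∀ j d, S j d ⊆ S j (d + 1)) :
    ∀ d₁ d₂ : ℕ, d₁ ≤ d₂ →
      KL f (vecchia f p (fun j => S j d₂)) ≤ KL f (vecchia f p (fun j => S j d₁)) := by
  intro d₁ d₂ hd
  classical
  have mpos : ∀ (U : Finset (Fin D)) z, 0 < marginal f U z := marginal_pos f hpos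
  have hVpos : ∀ (Sf : Fin D → Finset (Fin D)) z, 0 < vecchia f p Sf z := by
    intro Sf z
    exact Finset.prod_pos fun j _ => div_pos (mpos _ z) (mpos _ z)
  -- rewrite KL as difference
  have hKL : ∀ g : (Fin D → α) → ℝ, (∀ z, 0 < g z) →
      KL f g = (∑ z : Fin D → α, f z * Real.log (f z))
        - ∑ z : Fin D → α, f z * Real.log (g z) := by
    intro g hg
    unfold KL
    rw [← Finset.sum_sub_distrib]
    refine Finset.sum_congr rfl fun z _ => ?_
    rw [Real.log_div (hpos z).ne' (hg z).ne', mul_sub]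
  rw [hKL _ (hVpos _), hKL _ (hVpos _)]
  have hmain : ∑ z : Fin D → α, f z * Real.log (vecchia f p (fun j => S j d₁) z)
      ≤ ∑ z : Fin D → α, f z * Real.log (vecchia f p (fun j => S j d₂) z) := by
    have hexpand : ∀ e : ℕ, ∑ z : Fin D → α, f z * Real.log (vecchia f p (fun j => S j e) z)
        = ∑ j : Fin D, ∑ z : Fin D → α,
            f z * Real.log (marginal f (insert (p j) (S j e)) z / marginal f (S j e) z) := by
      intro e
      rw [Finset.sum_comm]
      refine Finset.sum_congr rfl fun z _ => ?_
      unfold vecchia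
      rw [Real.log_prod (fun j _ => (div_pos (mpos _ z) (mpos _ z)).ne'),
        Finset.mul_sum]
    rw [hexpand d₁, hexpand d₂]
    refine Finset.sum_le_sum fun j _ => ?_
    -- nestedness
    have hsub : ∀ e e' : ℕ, e ≤ e' → S j e ⊆ S j e' := by
      intro e e' hee
      induction e', hee using Nat.le_induction with
      | base => exact subset_rfl
      | succ n hn ih => exact ih.trans (hnested j n)
    have hpj : p j ∉ S j d₂ := by
      intro hmem
      have hmem2 := hhist j d₂ hmem
      unfold history at hmem2
      rw [Finset.mem_image] at hmem2
      obtain ⟨l, hl, he⟩ := hmem2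
      rw [Finset.mem_filter] at hl
      exact absurd (p.injective he ▸ hl.2) (lt_irrefl j)
    have hα : Nonempty α := by
      by_contra hc
      rw [not_nonempty_iff] at hc
      have : IsEmpty (Fin D → α) := by
        refine ⟨fun g => hc.false (g j)⟩
      rw [@Finset.univ_eq_empty _ _ this, Finset.sum_empty] at hsum
      exact one_ne_zero hsum.symm
    exact gain_mono f hpos hsum hα hpj (hsub d₁ d₂ hd)
  linarith [hmain]
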